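/- Let x̄ ∈ F be a locally optimal solution of (MPSC). Assume that x̄ is an S-stationary point of (MPSC) and that MPSC-SSOCQ holds at x̄. Then MPSC-SSONC holds at x̄: for every multiplier vector (λ, ρ, μ, ν) satisfying the S-stationarity system at x̄ and every d ∈ C^MPSC_F(x̄), one has dᵀ∇²ℓ(x̄)d ≥ 0, where ℓ := f + Σ_i λ_i g_i + Σ_j ρ_j h_j + Σ_k μ_k G_k + Σ_k ν_k H_k. -/

import Mathlib

open Set Filter Topology Metric

noncomputable section

namespace MPSC

abbrev Vec (n : ℕ) := EuclideanSpace ℝ (Fin n)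

variable {n m p l : ℕ}

open scoped Classical in
/-- Sum of a function over an index set (finite ambient type). -/
noncomputable def sumOver {α β : Type*} [Fintype α] [AddCommMonoid β]
    (S : Set α) (v : α → β) : β :=
  ∑ a, if a ∈ S then v a else 0

/-- The feasible set of (MPSC). -/
def Feas (g : Fin m → Vec n → ℝ) (h : Fin p → Vec n → ℝ)
    (G H : Fin l → Vec n → ℝ) : Set (Vec n) :=
  {x | (∀ i, g i x ≤ 0) ∧ (∀ j, h j x = 0) ∧ ∀ k, G k x * H k x = 0}

/-- Index set of active inequality constraints. -/
def Ig (g : Fin m → Vec n → ℝ) (xb : Vec n) : Set (Fin m) := {i | g i xb = 0}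

def IG (G H : Fin l → Vec n → ℝ) (xb : Vec n) : Set (Fin l) :=
  {k | G k xb = 0 ∧ H k xb ≠ 0}

def IH (G H : Fin l → Vec n → ℝ) (xb : Vec n) : Set (Fin l) :=
  {k | G k xb ≠ 0 ∧ H k xb = 0}

def IGH (G H : Fin l → Vec n → ℝ) (xb : Vec n) : Set (Fin l) :=
  {k | G k xb = 0 ∧ H k xb = 0}

/-- (β1, β2) is a disjoint bipartition of I_GH. -/
def Partition (G H : Fin l → Vec n → ℝ) (xb : Vec n) (β1 β2 : Set (Fin l)) : Prop :=
  β1 ∩ β2 = ∅ ∧ β1 ∪ β2 = IGH G H xb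

/-- Branch feasible set. -/
def BranchFeas (g : Fin m → Vec n → ℝ) (h : Fin p → Vec n → ℝ)
    (G H : Fin l → Vec n → ℝ) (xb : Vec n) (β1 β2 : Set (Fin l)) : Set (Vec n) :=
  {x | (∀ i, g i x ≤ 0) ∧ (∀ j, h j x = 0) ∧
    (∀ k ∈ IG G H xb ∪ β1, G k x = 0) ∧ ∀ k ∈ IH G H xb ∪ β2, H k x = 0}

/-- Bouligand tangent cone, as defined in the paper. -/
def tangentCone (Ω : Set (Vec n)) (xb : Vec n) : Set (Vec n) :=
  {d | ∃ t : ℕ → ℝ, ∃ x : ℕ → Vec n, (∀ k, 0 ≤ t k) ∧ (∀ k, x k ∈ Ω) ∧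
    Tendsto x atTop (nhds xb) ∧ Tendsto (fun k => t k • (x k - xb)) atTop (nhds d)}

/-- MPSC linearization cone. -/
def LCone (g : Fin m → Vec n → ℝ) (h : Fin p → Vec n → ℝ)
    (G H : Fin l → Vec n → ℝ) (xb : Vec n) : Set (Vec n) :=
  {d | (∀ i ∈ Ig g xb, fderiv ℝ (g i) xb d ≤ 0) ∧ (∀ j, fderiv ℝ (h j) xb d = 0) ∧
    (∀ k ∈ IG G H xb, fderiv ℝ (G k) xb d = 0) ∧ (∀ k ∈ IH G H xb, fderiv ℝ (H k) xb d = 0) ∧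
    ∀ k ∈ IGH G H xb, fderiv ℝ (G k) xb d * fderiv ℝ (H k) xb d = 0}

/-- Branch linearization cone. -/
def BranchLCone (g : Fin m → Vec n → ℝ) (h : Fin p → Vec n → ℝ)
    (G H : Fin l → Vec n → ℝ) (xb : Vec n) (β1 β2 : Set (Fin l)) : Set (Vec n) :=
  {d | (∀ i ∈ Ig g xb, fderiv ℝ (g i) xb d ≤ 0) ∧ (∀ j, fderiv ℝ (h j) xb d = 0) ∧
    (∀ k ∈ IG G H xb ∪ β1, fderiv ℝ (G k) xb d = 0) ∧
    ∀ k ∈ IH G H xb ∪ β2, fderiv ℝ (H k) xb d = 0}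

/-- MPSC critical subspace. -/
def CritSubspace (g : Fin m → Vec n → ℝ) (h : Fin p → Vec n → ℝ)
    (G H : Fin l → Vec n → ℝ) (xb : Vec n) : Set (Vec n) :=
  {d | (∀ i ∈ Ig g xb, fderiv ℝ (g i) xb d = 0) ∧ (∀ j, fderiv ℝ (h j) xb d = 0) ∧
    (∀ k ∈ IG G H xb ∪ IGH G H xb, fderiv ℝ (G k) xb d = 0) ∧
    ∀ k ∈ IH G H xb ∪ IGH G H xb, fderiv ℝ (H k) xb d = 0}

/-- Rank (dimension of the span) of the family of gradients
{∇g_i(x)}_{i∈I1} ∪ {∇h_j(x)}_j ∪ {∇G_k(x)}_{k∈I3} ∪ {∇H_k(x)}_{k∈I4}. -/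
def gradRank (g : Fin m → Vec n → ℝ) (h : Fin p → Vec n → ℝ)
    (G H : Fin l → Vec n → ℝ) (I1 : Set (Fin m)) (I3 I4 : Set (Fin l)) (x : Vec n) : ℕ :=
  Module.finrank ℝ ↥(Submodule.span ℝ
    ((fun i => gradient (g i) x) '' I1 ∪ Set.range (fun j => gradient (h j) x) ∪
     (fun k => gradient (G k) x) '' I3 ∪ (fun k => gradient (H k) x) '' I4))

/-- MPSC-LICQ. -/
def LICQ (g : Fin m → Vec n → ℝ) (h : Fin p → Vec n → ℝ)
    (G H : Fin l → Vec n → ℝ) (xb : Vec n) : Prop :=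
  ∀ (lam : Fin m → ℝ) (ρ : Fin p → ℝ) (μ ν : Fin l → ℝ),
    (∀ i, i ∉ Ig g xb → lam i = 0) →
    (∀ k, k ∉ IG G H xb ∪ IGH G H xb → μ k = 0) →
    (∀ k, k ∉ IH G H xb ∪ IGH G H xb → ν k = 0) →
    ∑ i, lam i • gradient (g i) xb + ∑ j, ρ j • gradient (h j) xb +
      ∑ k, μ k • gradient (G k) xb + ∑ k, ν k • gradient (H k) xb = 0 →
    lam = 0 ∧ ρ = 0 ∧ μ = 0 ∧ ν = 0

/-- MPSC-RCRCQ. -/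
def RCRCQ (g : Fin m → Vec n → ℝ) (h : Fin p → Vec n → ℝ)
    (G H : Fin l → Vec n → ℝ) (xb : Vec n) : Prop :=
  ∃ ε > (0:ℝ), ∀ I1 : Set (Fin m), I1 ⊆ Ig g xb →
    ∀ I3 I4 : Set (Fin l), I3 ⊆ IGH G H xb → I4 ⊆ IGH G H xb →
      ∀ x : Vec n, ‖x - xb‖ < ε →
        gradRank g h G H I1 (I3 ∪ IG G H xb) (I4 ∪ IH G H xb) x =
        gradRank g h G H I1 (I3 ∪ IG G H xb) (I4 ∪ IH G H xb) xb

/-- MPSC-WCR. -/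
def WCR (g : Fin m → Vec n → ℝ) (h : Fin p → Vec n → ℝ)
    (G H : Fin l → Vec n → ℝ) (xb : Vec n) : Prop :=
  ∃ ε > (0:ℝ), ∀ x : Vec n, ‖x - xb‖ < ε →
    gradRank g h G H (Ig g xb) (IG G H xb ∪ IGH G H xb) (IH G H xb ∪ IGH G H xb) x =
    gradRank g h G H (Ig g xb) (IG G H xb ∪ IGH G H xb) (IH G H xb ∪ IGH G H xb) xb

/-- MPSC-PWCR. -/
def PWCR (g : Fin m → Vec n → ℝ) (h : Fin p → Vec n → ℝ)
    (G H : Fin l → Vec n → ℝ) (xb : Vec n) : Prop :=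
  ∀ β1 β2 : Set (Fin l), Partition G H xb β1 β2 →
    ∃ ε > (0:ℝ), ∀ x : Vec n, ‖x - xb‖ < ε →
      gradRank g h G H (Ig g xb) (IG G H xb ∪ β1) (IH G H xb ∪ β2) x =
      gradRank g h G H (Ig g xb) (IG G H xb ∪ β1) (IH G H xb ∪ β2) xb

/-- The index set I_g^- associated with a branch (β1, β2). -/
def IgMinus (g : Fin m → Vec n → ℝ) (h : Fin p → Vec n → ℝ)
    (G H : Fin l → Vec n → ℝ) (xb : Vec n) (β1 β2 : Set (Fin l)) : Set (Fin m) :=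
  {i | i ∈ Ig g xb ∧ ∃ (lam : Fin m → ℝ) (ρ : Fin p → ℝ) (μ ν : Fin l → ℝ),
    (∀ i', 0 ≤ lam i') ∧ (∀ i', i' ∉ Ig g xb \ {i} → lam i' = 0) ∧
    (∀ k, k ∉ IG G H xb ∪ β1 → μ k = 0) ∧ (∀ k, k ∉ IH G H xb ∪ β2 → ν k = 0) ∧
    -gradient (g i) xb = ∑ i', lam i' • gradient (g i') xb + ∑ j, ρ j • gradient (h j) xb +
      ∑ k, μ k • gradient (G k) xb + ∑ k, ν k • gradient (H k) xb}

/-- MPSC-PCRSC. -/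
def PCRSC (g : Fin m → Vec n → ℝ) (h : Fin p → Vec n → ℝ)
    (G H : Fin l → Vec n → ℝ) (xb : Vec n) : Prop :=
  ∀ β1 β2 : Set (Fin l), Partition G H xb β1 β2 →
    ∃ ε > (0:ℝ), ∀ x : Vec n, ‖x - xb‖ < ε →
      gradRank g h G H (IgMinus g h G H xb β1 β2) (IG G H xb ∪ β1) (IH G H xb ∪ β2) x =
      gradRank g h G H (IgMinus g h G H xb β1 β2) (IG G H xb ∪ β1) (IH G H xb ∪ β2) xb

/-- A twice differentiable arc on [0, δ) (one-sided at the endpoint 0),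
with first derivative ξ'. -/
def TwiceDiffArc (δ : ℝ) (ξ ξ' : ℝ → Vec n) : Prop :=
  (∀ t ∈ Ico (0:ℝ) δ, HasDerivWithinAt ξ (ξ' t) (Ico (0:ℝ) δ) t) ∧
  ∀ t ∈ Ico (0:ℝ) δ, DifferentiableWithinAt ℝ ξ' (Ico (0:ℝ) δ) t

/-- MPSC-SSOCQ. -/
def SSOCQ (g : Fin m → Vec n → ℝ) (h : Fin p → Vec n → ℝ)
    (G H : Fin l → Vec n → ℝ) (xb : Vec n) : Prop :=
  ∀ d ∈ LCone g h G H xb, d ≠ 0 →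
    ∃ δ > (0:ℝ), ∃ J K : Set (Fin l), J ⊆ IGH G H xb ∧ K ⊆ IGH G H xb ∧
      ∃ ξ ξ' : ℝ → Vec n, TwiceDiffArc δ ξ ξ' ∧
        (∀ t ∈ Ico (0:ℝ) δ, ξ t ∈ Feas g h G H) ∧
        ξ 0 = xb ∧ ξ' 0 = d ∧
        (∀ t ∈ Ico (0:ℝ) δ, ∀ i ∈ Ig g xb, fderiv ℝ (g i) xb d = 0 → g i (ξ t) = 0) ∧
        (∀ t ∈ Ico (0:ℝ) δ, ∀ k ∈ IG G H xb ∪ J, G k (ξ t) = 0) ∧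
        ∀ t ∈ Ico (0:ℝ) δ, ∀ k ∈ IH G H xb ∪ K, H k (ξ t) = 0

/-- MPSC-WSOCQ. -/
def WSOCQ (g : Fin m → Vec n → ℝ) (h : Fin p → Vec n → ℝ)
    (G H : Fin l → Vec n → ℝ) (xb : Vec n) : Prop :=
  ∀ d ∈ CritSubspace g h G H xb, d ≠ 0 →
    ∃ δ > (0:ℝ), ∃ J K : Set (Fin l), J ⊆ IGH G H xb ∧ K ⊆ IGH G H xb ∧
      ∃ ζ ζ' : ℝ → Vec n, TwiceDiffArc δ ζ ζ' ∧
        (∀ t ∈ Ico (0:ℝ) δ, ζ t ∈ Feas g h G H) ∧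
        ζ 0 = xb ∧ ζ' 0 = d ∧
        (∀ t ∈ Ico (0:ℝ) δ, ∀ i ∈ Ig g xb, g i (ζ t) = 0) ∧
        (∀ t ∈ Ico (0:ℝ) δ, ∀ k ∈ IG G H xb ∪ J, G k (ζ t) = 0) ∧
        ∀ t ∈ Ico (0:ℝ) δ, ∀ k ∈ IH G H xb ∪ K, H k (ζ t) = 0

/-- The S-stationarity system for multipliers (λ, ρ, μ, ν) at xb. -/
def SStationarySystem (f : Vec n → ℝ) (g : Fin m → Vec n → ℝ) (h : Fin p → Vec n → ℝ)
    (G H : Fin l → Vec n → ℝ) (xb : Vec n)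
    (lam : Fin m → ℝ) (ρ : Fin p → ℝ) (μ ν : Fin l → ℝ) : Prop :=
  (∀ i, 0 ≤ lam i) ∧ (∀ i, lam i * g i xb = 0) ∧
  (∀ k ∈ IH G H xb ∪ IGH G H xb, μ k = 0) ∧
  (∀ k ∈ IG G H xb ∪ IGH G H xb, ν k = 0) ∧
  gradient f xb + ∑ i, lam i • gradient (g i) xb + ∑ j, ρ j • gradient (h j) xb +
    ∑ k, μ k • gradient (G k) xb + ∑ k, ν k • gradient (H k) xb = 0

def SStationary (f : Vec n → ℝ) (g : Fin m → Vec n → ℝ) (h : Fin p → Vec n → ℝ)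
    (G H : Fin l → Vec n → ℝ) (xb : Vec n) : Prop :=
  ∃ (lam : Fin m → ℝ) (ρ : Fin p → ℝ) (μ ν : Fin l → ℝ),
    SStationarySystem f g h G H xb lam ρ μ ν

/-- The M-stationarity system for multipliers (λ, ρ, μ, ν) at xb. -/
def MStationarySystem (f : Vec n → ℝ) (g : Fin m → Vec n → ℝ) (h : Fin p → Vec n → ℝ)
    (G H : Fin l → Vec n → ℝ) (xb : Vec n)
    (lam : Fin m → ℝ) (ρ : Fin p → ℝ) (μ ν : Fin l → ℝ) : Prop :=
  (∀ i, 0 ≤ lam i) ∧ (∀ i, lam i * g i xb = 0) ∧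
  (∀ k ∈ IH G H xb, μ k = 0) ∧ (∀ k ∈ IG G H xb, ν k = 0) ∧
  (∀ k ∈ IGH G H xb, μ k * ν k = 0) ∧
  gradient f xb + ∑ i, lam i • gradient (g i) xb + ∑ j, ρ j • gradient (h j) xb +
    ∑ k, μ k • gradient (G k) xb + ∑ k, ν k • gradient (H k) xb = 0

def MStationary (f : Vec n → ℝ) (g : Fin m → Vec n → ℝ) (h : Fin p → Vec n → ℝ)
    (G H : Fin l → Vec n → ℝ) (xb : Vec n) : Prop :=
  ∃ (lam : Fin m → ℝ) (ρ : Fin p → ℝ) (μ ν : Fin l → ℝ),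
    MStationarySystem f g h G H xb lam ρ μ ν

/-- Local optimality for (MPSC). -/
def LocallyOptimal (f : Vec n → ℝ) (g : Fin m → Vec n → ℝ) (h : Fin p → Vec n → ℝ)
    (G H : Fin l → Vec n → ℝ) (xb : Vec n) : Prop :=
  xb ∈ Feas g h G H ∧ ∃ ε > (0:ℝ), ∀ x ∈ Feas g h G H, ‖x - xb‖ < ε → f xb ≤ f x

/-- Hessian quadratic form dᵀ∇²φ(x)d. -/
def hessForm (φ : Vec n → ℝ) (x d : Vec n) : ℝ :=
  iteratedFDeriv ℝ 2 φ x ![d, d]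

/-- The Lagrange function ℓ. -/
def lagr (f : Vec n → ℝ) (g : Fin m → Vec n → ℝ) (h : Fin p → Vec n → ℝ)
    (G H : Fin l → Vec n → ℝ)
    (lam : Fin m → ℝ) (ρ : Fin p → ℝ) (μ ν : Fin l → ℝ) : Vec n → ℝ :=
  fun x => f x + ∑ i, lam i * g i x + ∑ j, ρ j * h j x +
    ∑ k, μ k * G k x + ∑ k, ν k * H k x

/-- Constraint-violation residual. -/
def residual (g : Fin m → Vec n → ℝ) (h : Fin p → Vec n → ℝ)
    (G H : Fin l → Vec n → ℝ) (x : Vec n) : ℝ :=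
  Real.sqrt (∑ i, max (g i x) 0 ^ 2 + ∑ j, h j x ^ 2 + ∑ k, min (G k x ^ 2) (H k x ^ 2))

/-- Penalty function P_κ. -/
def Pen (f : Vec n → ℝ) (g : Fin m → Vec n → ℝ) (h : Fin p → Vec n → ℝ)
    (G H : Fin l → Vec n → ℝ) (κ : ℝ) (x : Vec n) : ℝ :=
  f x + κ * residual g h G H x

/-- MPSC piecewise second-order quasi-normality. -/
def PSOQN (g : Fin m → Vec n → ℝ) (h : Fin p → Vec n → ℝ)
    (G H : Fin l → Vec n → ℝ) (xb : Vec n) : Prop :=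
  ∀ β1 β2 : Set (Fin l), Partition G H xb β1 β2 →
    ¬ ∃ (lam : Fin m → ℝ) (ρ : Fin p → ℝ) (μ ν : Fin l → ℝ),
      (∀ i, 0 ≤ lam i) ∧
      (∀ k, k ∉ IG G H xb ∪ β1 → μ k = 0) ∧ (∀ k, k ∉ IH G H xb ∪ β2 → ν k = 0) ∧
      ¬(lam = 0 ∧ ρ = 0 ∧ μ = 0 ∧ ν = 0) ∧
      (∑ i, lam i • gradient (g i) xb + ∑ j, ρ j • gradient (h j) xb +
        ∑ k, μ k • gradient (G k) xb + ∑ k, ν k • gradient (H k) xb = 0) ∧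
      (∀ d : Vec n, (∀ i ∈ Ig g xb, fderiv ℝ (g i) xb d = 0) →
        (∀ j, fderiv ℝ (h j) xb d = 0) →
        (∀ k ∈ IG G H xb ∪ β1, fderiv ℝ (G k) xb d = 0) →
        (∀ k ∈ IH G H xb ∪ β2, fderiv ℝ (H k) xb d = 0) →
        0 ≤ ∑ i, lam i * hessForm (g i) xb d + ∑ j, ρ j * hessForm (h j) xb d +
          ∑ k, μ k * hessForm (G k) xb d + ∑ k, ν k * hessForm (H k) xb d) ∧
      ∃ xs : ℕ → Vec n, Tendsto xs atTop (nhds xb) ∧ ∀ s,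
        (∀ i, 0 < lam i → 0 < lam i * g i (xs s)) ∧
        (∀ j, ρ j ≠ 0 → 0 < ρ j * h j (xs s)) ∧
        (∀ k, μ k ≠ 0 → 0 < μ k * G k (xs s)) ∧
        (∀ k, ν k ≠ 0 → 0 < ν k * H k (xs s))

lemma second_order_test {φ ψ : ℝ → ℝ} {δ η A : ℝ} (hδ : 0 < δ) (hη : 0 < η)
    (hφ : ∀ t ∈ Ico (0:ℝ) δ, HasDerivWithinAt φ (ψ t) (Ico (0:ℝ) δ) t)
    (hψ0 : ψ 0 = 0)
    (hA : HasDerivWithinAt ψ A (Ico (0:ℝ) δ) 0)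
    (hmin : ∀ t ∈ Ico (0:ℝ) η, φ 0 ≤ φ t) : 0 ≤ A := by
  by_contra hneg
  push_neg at hneg
  rw [hasDerivWithinAt_iff_tendsto_slope] at hA
  have hev : ∀ᶠ t in 𝓝[Ico (0:ℝ) δ \ {0}] (0:ℝ), slope ψ 0 t < 0 :=
    hA (Iio_mem_nhds hneg)
  rw [eventually_nhdsWithin_iff] at hev
  rcases Metric.eventually_nhds_iff.mp hev with ⟨ε', hε', hball⟩
  set c := min (min (ε'/2) (η/2)) (δ/2) with hc
  have hc0 : 0 < c := by positivity
  have hcδ : c < δ := lt_of_le_of_lt (min_le_right _ _) (by linarith)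
  have hcη : c < η :=
    lt_of_le_of_lt (le_trans (min_le_left _ _) (min_le_right _ _)) (by linarith)
  have hcε : c < ε' :=
    lt_of_le_of_lt (le_trans (min_le_left _ _) (min_le_left _ _)) (by linarith)
  have hψneg : ∀ t ∈ Ioo (0:ℝ) c, ψ t < 0 := by
    intro t ht
    have h1 : dist t 0 < ε' := by
      rw [Real.dist_eq, sub_zero, abs_of_nonneg ht.1.le]; exact ht.2.trans hcε
    have h2 : t ∈ Ico (0:ℝ) δ \ {0} := ⟨⟨ht.1.le, ht.2.trans hcδ⟩, ne_of_gt ht.1⟩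
    have h3 : ψ t / t < 0 := by
      have := hball h1 h2
      rwa [slope_def_field, hψ0, sub_zero, sub_zero] at this
    rcases div_neg_iff.mp h3 with ⟨_, h⟩ | ⟨h, _⟩
    · exact absurd ht.1 (not_lt.2 h.le)
    · exact h
  have hcont : ContinuousOn φ (Icc 0 c) := fun t ht =>
    ((hφ t ⟨ht.1, lt_of_le_of_lt ht.2 hcδ⟩).continuousWithinAt).mono
      (fun y hy => ⟨hy.1, lt_of_le_of_lt hy.2 hcδ⟩)
  have hanti : StrictAntiOn φ (Icc 0 c) := by
    apply strictAntiOn_of_deriv_neg (convex_Icc 0 c) hcont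
    intro x hx
    rw [interior_Icc] at hx
    have hxs : Ico (0:ℝ) δ ∈ 𝓝 x := Ico_mem_nhds hx.1 (hx.2.trans hcδ)
    have hda := (hφ x ⟨hx.1.le, hx.2.trans hcδ⟩).hasDerivAt hxs
    rw [hda.deriv]
    exact hψneg x hx
  have h1 : φ c < φ 0 :=
    hanti (left_mem_Icc.mpr hc0.le) (right_mem_Icc.mpr hc0.le) hc0
  have h2 : φ 0 ≤ φ c := hmin c ⟨hc0.le, hcη⟩
  linarith

theorem ssonc_under_ssocq {n m p l : ℕ} (f : Vec n → ℝ) (g : Fin m → Vec n → ℝ)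
    (h : Fin p → Vec n → ℝ) (G H : Fin l → Vec n → ℝ)
    (hf : ContDiff ℝ 2 f) (hg : ∀ i, ContDiff ℝ 2 (g i)) (hh : ∀ j, ContDiff ℝ 2 (h j))
    (hG : ∀ k, ContDiff ℝ 2 (G k)) (hH : ∀ k, ContDiff ℝ 2 (H k))
    (xb : Vec n) (hxb : xb ∈ Feas g h G H)
    (hopt : LocallyOptimal f g h G H xb) (hS : SStationary f g h G H xb)
    (hcq : SSOCQ g h G H xb) :
    ∀ (lam : Fin m → ℝ) (ρ : Fin p → ℝ) (μ ν : Fin l → ℝ),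
      SStationarySystem f g h G H xb lam ρ μ ν →
      ∀ d ∈ LCone g h G H xb, fderiv ℝ f xb d ≤ 0 →
        0 ≤ hessForm (lagr f g h G H lam ρ μ ν) xb d := by
  classical
  intro lam ρ μ ν hSt d hd hcrit
  obtain ⟨hlam, hcomp, hμ0, hν0, hgradeq⟩ := hSt
  obtain ⟨hgfeas, hhfeas, hGHfeas⟩ := hxb
  set ℓ := lagr f g h G H lam ρ μ ν with hℓ
  have h2 : (2 : WithTop ℕ∞) ≠ 0 := by norm_num
  -- gradient-fderiv identity
  have key : ∀ (φ : Vec n → ℝ) (v : Vec n),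
      (inner ℝ (gradient φ xb) v : ℝ) = fderiv ℝ φ xb v := by
    intro φ v
    rw [gradient]
    exact InnerProductSpace.toDual_symm_apply
  -- ℓ is C²
  have hl2 : ContDiff ℝ 2 ℓ := by
    rw [hℓ]; unfold lagr
    exact ((((hf.add (ContDiff.sum fun i _ => contDiff_const.mul (hg i))).add
      (ContDiff.sum fun j _ => contDiff_const.mul (hh j))).add
      (ContDiff.sum fun k _ => contDiff_const.mul (hG k))).add
      (ContDiff.sum fun k _ => contDiff_const.mul (hH k)))
  -- derivative of ℓ at xb
  set Dl : Vec n →L[ℝ] ℝ := fderiv ℝ f xb + ∑ i, lam i • fderiv ℝ (g i) xb +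
    ∑ j, ρ j • fderiv ℝ (h j) xb + ∑ k, μ k • fderiv ℝ (G k) xb +
    ∑ k, ν k • fderiv ℝ (H k) xb with hDldef
  have hDeriv : HasFDerivAt ℓ Dl xb := by
    rw [hℓ]; unfold lagr
    exact ((((((hf.differentiable h2) xb).hasFDerivAt).add
      (HasFDerivAt.fun_sum fun i _ =>
        ((((hg i).differentiable h2) xb).hasFDerivAt).const_mul (lam i))).add
      (HasFDerivAt.fun_sum fun j _ =>
        ((((hh j).differentiable h2) xb).hasFDerivAt).const_mul (ρ j))).add
      (HasFDerivAt.fun_sum fun k _ =>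
        ((((hG k).differentiable h2) xb).hasFDerivAt).const_mul (μ k))).add
      (HasFDerivAt.fun_sum fun k _ =>
        ((((hH k).differentiable h2) xb).hasFDerivAt).const_mul (ν k))
  have hDl_apply : ∀ v : Vec n, Dl v = fderiv ℝ f xb v + ∑ i, lam i * fderiv ℝ (g i) xb v +
      ∑ j, ρ j * fderiv ℝ (h j) xb v + ∑ k, μ k * fderiv ℝ (G k) xb v +
      ∑ k, ν k * fderiv ℝ (H k) xb v := by
    intro v
    simp [hDldef, ContinuousLinearMap.sum_apply]
  have hDl_zero : ∀ v : Vec n, Dl v = 0 := by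
    intro v
    have h0 : (inner ℝ (gradient f xb + ∑ i, lam i • gradient (g i) xb +
        ∑ j, ρ j • gradient (h j) xb + ∑ k, μ k • gradient (G k) xb +
        ∑ k, ν k • gradient (H k) xb) v : ℝ) = 0 := by
      rw [hgradeq, inner_zero_left]
    rw [hDl_apply]
    simp only [inner_add_left, sum_inner, real_inner_smul_left, key] at h0
    exact h0
  obtain ⟨hdg, hdh, hdG, hdH, hdGH⟩ := hd
  -- indices with nonzero μ/ν
  have hμIG : ∀ k : Fin l, μ k ≠ 0 → k ∈ IG G H xb := by
    intro k hμk
    have hk : k ∉ IH G H xb ∪ IGH G H xb := fun hmem => hμk (hμ0 k hmem)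
    rcases mul_eq_zero.mp (hGHfeas k) with hG0 | hH0
    · by_cases hH0' : H k xb = 0
      · exact absurd (Set.mem_union_right _ (show k ∈ IGH G H xb from ⟨hG0, hH0'⟩)) hk
      · exact show G k xb = 0 ∧ H k xb ≠ 0 from ⟨hG0, hH0'⟩
    · by_cases hG0' : G k xb = 0
      · exact absurd (Set.mem_union_right _ (show k ∈ IGH G H xb from ⟨hG0', hH0⟩)) hk
      · exact absurd (Set.mem_union_left _ (show k ∈ IH G H xb from ⟨hG0', hH0⟩)) hk
  have hνIH : ∀ k : Fin l, ν k ≠ 0 → k ∈ IH G H xb := by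
    intro k hνk
    have hk : k ∉ IG G H xb ∪ IGH G H xb := fun hmem => hνk (hν0 k hmem)
    rcases mul_eq_zero.mp (hGHfeas k) with hG0 | hH0
    · by_cases hH0' : H k xb = 0
      · exact absurd (Set.mem_union_right _ (show k ∈ IGH G H xb from ⟨hG0, hH0'⟩)) hk
      · exact absurd (Set.mem_union_left _ (show k ∈ IG G H xb from ⟨hG0, hH0'⟩)) hk
    · by_cases hG0' : G k xb = 0
      · exact absurd (Set.mem_union_right _ (show k ∈ IGH G H xb from ⟨hG0', hH0⟩)) hk
      · exact show G k xb ≠ 0 ∧ H k xb = 0 from ⟨hG0', hH0⟩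
  have hμterm : ∀ k : Fin l, μ k * fderiv ℝ (G k) xb d = 0 := by
    intro k
    by_cases hμk : μ k = 0
    · rw [hμk, zero_mul]
    · rw [hdG k (hμIG k hμk), mul_zero]
  have hνterm : ∀ k : Fin l, ν k * fderiv ℝ (H k) xb d = 0 := by
    intro k
    by_cases hνk : ν k = 0
    · rw [hνk, zero_mul]
    · rw [hdH k (hνIH k hνk), mul_zero]
  -- sign argument
  have hgnonpos : ∀ i : Fin m, lam i * fderiv ℝ (g i) xb d ≤ 0 := by
    intro i
    by_cases hgi : g i xb = 0
    · exact mul_nonpos_of_nonneg_of_nonpos (hlam i) (hdg i hgi)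
    · have hli : lam i = 0 := (mul_eq_zero.mp (hcomp i)).resolve_right hgi
      rw [hli, zero_mul]
  have e1 : fderiv ℝ f xb d + ∑ i, lam i * fderiv ℝ (g i) xb d +
      ∑ j, ρ j * fderiv ℝ (h j) xb d + ∑ k, μ k * fderiv ℝ (G k) xb d +
      ∑ k, ν k * fderiv ℝ (H k) xb d = 0 := by
    rw [← hDl_apply]; exact hDl_zero d
  have eh : ∑ j, ρ j * fderiv ℝ (h j) xb d = 0 :=
    Finset.sum_eq_zero fun j _ => by rw [hdh j, mul_zero]
  have eG : ∑ k, μ k * fderiv ℝ (G k) xb d = 0 :=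
    Finset.sum_eq_zero fun k _ => hμterm k
  have eH : ∑ k, ν k * fderiv ℝ (H k) xb d = 0 :=
    Finset.sum_eq_zero fun k _ => hνterm k
  have hsum_eq : ∑ i, lam i * fderiv ℝ (g i) xb d = - fderiv ℝ f xb d := by
    rw [eh, eG, eH] at e1; linarith
  have hS0 : ∑ i, lam i * fderiv ℝ (g i) xb d = 0 := by
    refine le_antisymm (Finset.sum_nonpos fun i _ => hgnonpos i) ?_
    rw [hsum_eq]; linarith
  have hterm0 : ∀ i : Fin m, lam i * fderiv ℝ (g i) xb d = 0 := fun i =>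
    (Finset.sum_eq_zero_iff_of_nonpos (fun i _ => hgnonpos i)).mp hS0 i (Finset.mem_univ i)
  -- trivial case d = 0
  by_cases hd0 : d = 0
  · subst hd0
    refine le_of_eq ?_
    exact ((iteratedFDeriv ℝ 2 ℓ xb).map_coord_zero (0 : Fin 2) rfl).symm
  -- SSOCQ arc
  obtain ⟨δ, hδ, J, K, hJ, hK, ξ, ξ', harc, hfeas, hξ0, hξ'0, hgarc, hGarc, hHarc⟩ :=
    hcq d ⟨hdg, hdh, hdG, hdH, hdGH⟩ hd0
  obtain ⟨harc1, harc2⟩ := harc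
  have h0s : (0:ℝ) ∈ Ico (0:ℝ) δ := ⟨le_refl 0, hδ⟩
  have hξd : HasDerivWithinAt ξ d (Ico (0:ℝ) δ) 0 := hξ'0 ▸ harc1 0 h0s
  set ψ : ℝ → ℝ := fun t => fderiv ℝ ℓ (ξ t) (ξ' t) with hψdef
  have hφderiv : ∀ t ∈ Ico (0:ℝ) δ, HasDerivWithinAt (ℓ ∘ ξ) (ψ t) (Ico (0:ℝ) δ) t := by
    intro t ht
    exact (((hl2.differentiable h2) (ξ t)).hasFDerivAt).comp_hasDerivWithinAt t (harc1 t ht)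
  have hfd1 : ContDiff ℝ 1 (fderiv ℝ ℓ) := hl2.fderiv_right (by norm_num)
  have hF1 : HasDerivWithinAt (fun t => fderiv ℝ ℓ (ξ t)) (fderiv ℝ (fderiv ℝ ℓ) xb d)
      (Ico (0:ℝ) δ) 0 := by
    have hc := (((hfd1.differentiable one_ne_zero) (ξ 0)).hasFDerivAt).comp_hasDerivWithinAt 0 hξd
    rw [hξ0] at hc
    exact hc
  have hξ'diff : HasDerivWithinAt ξ' (derivWithin ξ' (Ico (0:ℝ) δ) 0) (Ico (0:ℝ) δ) 0 :=
    (harc2 0 h0s).hasDerivWithinAt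
  have hA : HasDerivWithinAt ψ (hessForm ℓ xb d) (Ico (0:ℝ) δ) 0 := by
    have h' := hF1.clm_apply hξ'diff
    rw [hξ'0, hξ0, hDeriv.fderiv] at h'
    rw [hDl_zero, add_zero] at h'
    have hhess : hessForm ℓ xb d = fderiv ℝ (fderiv ℝ ℓ) xb d d := by
      unfold hessForm
      rw [iteratedFDeriv_two_apply]
      rfl
    rwa [hhess]
  have hψzero : ψ 0 = 0 := by
    simp only [hψdef]
    rw [hξ0, hξ'0, hDeriv.fderiv]
    exact hDl_zero d
  -- ℓ = f along the arc
  have hℓeq : ∀ t ∈ Ico (0:ℝ) δ, ℓ (ξ t) = f (ξ t) := by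
    intro t ht
    obtain ⟨hgf, hhf, hGHf⟩ := hfeas t ht
    have s1 : ∑ i, lam i * g i (ξ t) = 0 := by
      refine Finset.sum_eq_zero fun i _ => ?_
      rcases (hlam i).lt_or_eq with hpos | hzero
      · have hgi0 : g i xb = 0 :=
          (mul_eq_zero.mp (hcomp i)).resolve_left (ne_of_gt hpos)
        have hdgi : fderiv ℝ (g i) xb d = 0 :=
          (mul_eq_zero.mp (hterm0 i)).resolve_left (ne_of_gt hpos)
        rw [hgarc t ht i hgi0 hdgi, mul_zero]
      · rw [← hzero, zero_mul]
    have s2 : ∑ j, ρ j * h j (ξ t) = 0 :=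
      Finset.sum_eq_zero fun j _ => by rw [hhf j, mul_zero]
    have s3 : ∑ k, μ k * G k (ξ t) = 0 := by
      refine Finset.sum_eq_zero fun k _ => ?_
      by_cases hμk : μ k = 0
      · rw [hμk, zero_mul]
      · rw [hGarc t ht k (Set.mem_union_left _ (hμIG k hμk)), mul_zero]
    have s4 : ∑ k, ν k * H k (ξ t) = 0 := by
      refine Finset.sum_eq_zero fun k _ => ?_
      by_cases hνk : ν k = 0
      · rw [hνk, zero_mul]
      · rw [hHarc t ht k (Set.mem_union_left _ (hνIH k hνk)), mul_zero]
    rw [hℓ]; unfold lagr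
    rw [s1, s2, s3, s4]; ring
  -- local optimality radius
  obtain ⟨-, ε, hε, hloc⟩ := hopt
  have hcont0 : ContinuousWithinAt ξ (Ico (0:ℝ) δ) 0 := hξd.continuousWithinAt
  have hev : ∀ᶠ t in 𝓝[Ico (0:ℝ) δ] (0:ℝ), ‖ξ t - xb‖ < ε := by
    have htend := hcont0.tendsto
    rw [hξ0] at htend
    filter_upwards [htend (Metric.ball_mem_nhds xb hε)] with t ht
    simp only [Set.mem_preimage, Metric.mem_ball, dist_eq_norm] at ht
    exact ht
  rw [eventually_nhdsWithin_iff] at hev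
  rcases Metric.eventually_nhds_iff.mp hev with ⟨η', hη', hb⟩
  set η := min η' δ with hηdef
  have hη0 : 0 < η := lt_min hη' hδ
  have hmin : ∀ t ∈ Ico (0:ℝ) η, (ℓ ∘ ξ) 0 ≤ (ℓ ∘ ξ) t := by
    intro t ht
    have hts : t ∈ Ico (0:ℝ) δ := ⟨ht.1, lt_of_lt_of_le ht.2 (min_le_right _ _)⟩
    have hdist : dist t 0 < η' := by
      rw [Real.dist_eq, sub_zero, abs_of_nonneg ht.1]
      exact lt_of_lt_of_le ht.2 (min_le_left _ _)
    have hnear : ‖ξ t - xb‖ < ε := hb hdist hts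
    have h1 : f xb ≤ f (ξ t) := hloc (ξ t) (hfeas t hts) hnear
    have e0 : (ℓ ∘ ξ) 0 = f xb := by
      show ℓ (ξ 0) = f xb
      rw [hℓeq 0 h0s, hξ0]
    have et : (ℓ ∘ ξ) t = f (ξ t) := hℓeq t hts
    rw [e0, et]
    exact h1
  exact second_order_test hδ hη0 hφderiv hψzero hA hmin

end MPSC
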